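/- Define E, O: ℝ^T → ℝ by E(x) = −Ψ(1)Φ(x₁) + Σ_{1 ≤ i < T, i even} [Ψ(−x_i)Φ(−x_{i+1}) − Ψ(x_i)Φ(x_{i+1})] and O(x) = Σ_{1 ≤ i < T, i odd} [Ψ(−x_i)Φ(−x_{i+1}) − Ψ(x_i)Φ(x_{i+1})]. Then progress along the chain alternates between E and O: for every x ∈ ℝ^T and every k with 0 ≤ k < T such that x_j = 0 for all j > k, (i) ∂_j E(x) = 0 and ∂_j O(x) = 0 for all j > k + 1; (ii) if k is odd then additionally ∂_{k+1} E(x) = 0; (iii) if k is even then additionally ∂_{k+1} O(x) = 0. In particular, only the even-part E can make the (k+1)-st coordinate of a gradient step nonzero when k is even, and only the odd-part O can when k is odd. -/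

import Mathlib

/-- Ψ(z) = 0 for z ≤ 1/2 and Ψ(z) = exp(1 − 1/(2z−1)²) for z > 1/2. -/
noncomputable def Psi (z : ℝ) : ℝ :=
  if z ≤ 1/2 then 0 else Real.exp (1 - 1/(2*z - 1)^2)

/-- Φ(z) = √e ∫_{−∞}^{z} exp(−t²/2) dt. -/
noncomputable def Phi (z : ℝ) : ℝ :=
  Real.sqrt (Real.exp 1) * ∫ t in Set.Iic z, Real.exp (-t^2/2)

/-- The 1-based `i`-th coordinate of `x` (junk value 0 out of range): `coord x i = x_{i+1}`
in 0-based terms. -/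
noncomputable def coord {T : ℕ} (x : EuclideanSpace ℝ (Fin T)) (i : ℕ) : ℝ :=
  if h : i < T then x ⟨i, h⟩ else 0

/-- f̂_T(x) = −Ψ(1)Φ(x₁) + Σ_{i=1}^{T−1} [Ψ(−x_i)Φ(−x_{i+1}) − Ψ(x_i)Φ(x_{i+1})],
where the 1-based coordinate x_i is `coord x (i-1)`. -/
noncomputable def fhat (T : ℕ) (x : EuclideanSpace ℝ (Fin T)) : ℝ :=
  -(Psi 1) * Phi (coord x 0) +
    ∑ i ∈ Finset.Ico 1 T,
      (Psi (-(coord x (i-1))) * Phi (-(coord x i)) - Psi (coord x (i-1)) * Phi (coord x i))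


/-- The even part E(x) = −Ψ(1)Φ(x₁) + Σ_{1 ≤ i < T, i even}
[Ψ(−x_i)Φ(−x_{i+1}) − Ψ(x_i)Φ(x_{i+1})] (1-based coordinates). -/
noncomputable def Echain (T : ℕ) (x : EuclideanSpace ℝ (Fin T)) : ℝ :=
  -(Psi 1) * Phi (coord x 0) +
    ∑ i ∈ (Finset.Ico 1 T).filter (fun i => Even i),
      (Psi (-(coord x (i-1))) * Phi (-(coord x i)) - Psi (coord x (i-1)) * Phi (coord x i))

/-- The odd part O(x) = Σ_{1 ≤ i < T, i odd}
[Ψ(−x_i)Φ(−x_{i+1}) − Ψ(x_i)Φ(x_{i+1})] (1-based coordinates). -/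
noncomputable def Ochain (T : ℕ) (x : EuclideanSpace ℝ (Fin T)) : ℝ :=
  ∑ i ∈ (Finset.Ico 1 T).filter (fun i => Odd i),
    (Psi (-(coord x (i-1))) * Phi (-(coord x i)) - Psi (coord x (i-1)) * Phi (coord x i))

open Real Set Filter Topology

noncomputable def psi' (z : ℝ) : ℝ :=
  if z ≤ 1/2 then 0 else Real.exp (1 - 1/(2*z - 1)^2) * (4/(2*z - 1)^3)

lemma Psi_nonpos {z : ℝ} (h : z ≤ 1/2) : Psi z = 0 := if_pos h
lemma psi'_nonpos {z : ℝ} (h : z ≤ 1/2) : psi' z = 0 := if_pos h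

lemma Psi_nonneg (z : ℝ) : 0 ≤ Psi z := by
  rw [Psi]; split
  · exact le_refl 0
  · positivity

lemma hasDerivAt_Psi (z : ℝ) : HasDerivAt Psi (psi' z) z := by
  rcases lt_trichotomy z (1/2) with h | h | h
  · have hev : Psi =ᶠ[𝓝 z] (fun _ : ℝ => (0:ℝ)) := by
      filter_upwards [Iio_mem_nhds h] with w hw
      rw [Psi, if_pos (mem_Iio.mp hw).le]
    rw [psi'_nonpos h.le]
    exact (hasDerivAt_const z (0:ℝ)).congr_of_eventuallyEq hev
  · subst h
    rw [psi'_nonpos le_rfl, hasDerivAt_iff_tendsto_slope]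
    have hb : ∀ w : ℝ, ‖slope Psi (1/2) w‖ ≤ 2 * Real.exp 1 * |2*w - 1| := by
      intro w
      have hsl : slope Psi (1/2) w = Psi w / (w - 1/2) := by
        simp only [slope, vsub_eq_sub, smul_eq_mul]
        rw [Psi_nonpos (le_refl ((1:ℝ)/2)), sub_zero]
        ring
      rcases le_or_gt w (1/2) with hw | hw
      · rw [hsl, Psi_nonpos hw]
        simp
        positivity
      · have h1 : (0:ℝ) < 2*w - 1 := by linarith
        have h2 : Psi w ≤ Real.exp 1 * (2*w-1)^2 := by
          rw [Psi, if_neg (by linarith)]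
          have hu : (0:ℝ) < 1/(2*w-1)^2 := by positivity
          have : Real.exp (1 - 1/(2*w-1)^2) = Real.exp 1 * Real.exp (-(1/(2*w-1)^2)) := by
            rw [← Real.exp_add]; ring_nf
          rw [this]
          have hle : Real.exp (-(1/(2*w-1)^2)) ≤ (2*w-1)^2 := by
            rw [Real.exp_neg]
            rw [inv_le_comm₀ (Real.exp_pos _) (by positivity)]
            calc ((2*w-1)^2)⁻¹ = 1/(2*w-1)^2 := by rw [one_div]
              _ ≤ Real.exp (1/(2*w-1)^2) := by
                  have := Real.add_one_le_exp (1/(2*w-1)^2); linarith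
          calc Real.exp 1 * Real.exp (-(1/(2*w-1)^2)) ≤ Real.exp 1 * (2*w-1)^2 := by
                exact mul_le_mul_of_nonneg_left hle (Real.exp_pos 1).le
            _ = Real.exp 1 * (2*w-1)^2 := rfl
        rw [hsl, Real.norm_eq_abs, abs_of_nonneg (div_nonneg (Psi_nonneg w) (by linarith)),
          abs_of_pos h1, div_le_iff₀ (by linarith : (0:ℝ) < w - 1/2)]
        nlinarith [Real.exp_pos 1]
    have hg : Tendsto (fun w : ℝ => 2 * Real.exp 1 * |2*w - 1|) (𝓝[≠] (1/2:ℝ)) (𝓝 0) := by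
      have hc : Tendsto (fun w : ℝ => 2 * Real.exp 1 * |2*w - 1|) (𝓝 (1/2:ℝ))
          (𝓝 (2 * Real.exp 1 * |2*(1/2:ℝ) - 1|)) := by
        apply Continuous.tendsto; continuity
      have : (2 * Real.exp 1 * |2*(1/2:ℝ) - 1|) = 0 := by norm_num
      rw [this] at hc
      exact hc.mono_left nhdsWithin_le_nhds
    exact squeeze_zero_norm hb hg
  · have hne : (2*z - 1) ≠ 0 := by intro hz; rw [sub_eq_zero] at hz; linarith [hz]
    have h1 : HasDerivAt (fun w : ℝ => 2*w - 1) 2 z := by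
      simpa using ((hasDerivAt_id z).const_mul (2:ℝ)).sub_const 1
    have h2 : HasDerivAt (fun w : ℝ => (2*w - 1)^2) ((2:ℕ) * (2*z-1)^(2-1) * 2) z := h1.pow 2
    have h3 := h2.inv (pow_ne_zero 2 hne)
    have h4 : HasDerivAt (fun w : ℝ => 1 - 1/(2*w-1)^2) (-(-((2:ℕ) * (2*z-1)^(2-1) * 2) / ((2*z-1)^2)^2)) z := by
      simpa [one_div] using h3.const_sub (1:ℝ)
    have h5 := h4.exp
    have heq : (fun w : ℝ => Real.exp (1 - 1/(2*w-1)^2)) =ᶠ[𝓝 z] Psi := by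
      filter_upwards [Ioi_mem_nhds h] with w hw
      rw [Psi, if_neg (not_le.2 (by linarith [mem_Ioi.mp hw] : (1:ℝ)/2 < w))]
    have h6 := h5.congr_of_eventuallyEq heq.symm
    refine h6.congr_deriv ?_
    rw [psi', if_neg (by linarith)]
    field_simp
    ring

noncomputable def phi' (z : ℝ) : ℝ := Real.sqrt (Real.exp 1) * Real.exp (-z^2/2)

lemma hasDerivAt_Phi (z : ℝ) : HasDerivAt Phi (phi' z) z := by
  have hcont : Continuous fun t : ℝ => Real.exp (-t^2/2) := by continuity
  have hint : MeasureTheory.Integrable fun t : ℝ => Real.exp (-t^2/2) := by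
    have h := integrable_exp_neg_mul_sq (by norm_num : (0:ℝ) < 1/2)
    have heq : (fun t : ℝ => Real.exp (-t^2/2)) = fun t : ℝ => Real.exp (-(1/2) * t^2) := by
      funext t; congr 1; ring
    rw [heq]; exact h
  have key : Phi = fun w : ℝ => Real.sqrt (Real.exp 1) *
      ((∫ t in Set.Iic (0:ℝ), Real.exp (-t^2/2)) + ∫ t in (0:ℝ)..w, Real.exp (-t^2/2)) := by
    funext w
    rw [Phi]
    congr 1
    rw [← intervalIntegral.integral_Iic_sub_Iic hint.integrableOn hint.integrableOn]
    ring
  rw [key]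
  have h1 : HasDerivAt (fun w : ℝ => ∫ t in (0:ℝ)..w, Real.exp (-t^2/2)) (Real.exp (-z^2/2)) z :=
    intervalIntegral.integral_hasDerivAt_right hint.intervalIntegrable
      (hcont.stronglyMeasurableAtFilter _ _) hcont.continuousAt
  simpa [phi'] using (h1.const_add (∫ t in Set.Iic (0:ℝ), Real.exp (-t^2/2))).const_mul
    (Real.sqrt (Real.exp 1))

noncomputable def Lcoord (T m : ℕ) : EuclideanSpace ℝ (Fin T) →L[ℝ] ℝ :=
  if h : m < T then EuclideanSpace.proj (⟨m, h⟩ : Fin T) else 0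

lemma coord_eq {T : ℕ} (x : EuclideanSpace ℝ (Fin T)) (m : ℕ) : coord x m = Lcoord T m x := by
  rw [coord, Lcoord]
  split
  · simp
  · simp

lemma hasFDerivAt_coord {T : ℕ} (x : EuclideanSpace ℝ (Fin T)) (m : ℕ) :
    HasFDerivAt (fun y : EuclideanSpace ℝ (Fin T) => coord y m) (Lcoord T m) x := by
  have h : (fun y : EuclideanSpace ℝ (Fin T) => coord y m) = fun y => Lcoord T m y :=
    funext fun y => coord_eq y m
  rw [h]
  exact (Lcoord T m).hasFDerivAt

lemma Lcoord_single {T : ℕ} (m : ℕ) (j : Fin T) :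
    Lcoord T m (EuclideanSpace.single j 1) = if m = (j : ℕ) then 1 else 0 := by
  rw [Lcoord]
  split
  · next h1 =>
    have : EuclideanSpace.proj (⟨m, h1⟩ : Fin T) (EuclideanSpace.single j 1)
        = EuclideanSpace.single j (1:ℝ) ⟨m, h1⟩ := rfl
    rw [this, EuclideanSpace.single_apply]
    by_cases hmj : m = (j : ℕ)
    · simp [Fin.ext_iff, hmj]
    · simp [Fin.ext_iff, hmj, Ne.symm]
  · next h1 =>
    have : m ≠ (j : ℕ) := by have := j.isLt; omega
    simp [this]

noncomputable def termD (T i : ℕ) (x : EuclideanSpace ℝ (Fin T)) :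
    EuclideanSpace ℝ (Fin T) →L[ℝ] ℝ :=
  (-(psi' (-(coord x (i-1)))) * Phi (-(coord x i)) - psi' (coord x (i-1)) * Phi (coord x i))
      • Lcoord T (i-1)
  + (-(Psi (-(coord x (i-1)))) * phi' (-(coord x i)) - Psi (coord x (i-1)) * phi' (coord x i))
      • Lcoord T i

lemma hasFDerivAt_term {T : ℕ} (i : ℕ) (x : EuclideanSpace ℝ (Fin T)) :
    HasFDerivAt (fun y => Psi (-(coord y (i-1))) * Phi (-(coord y i))
      - Psi (coord y (i-1)) * Phi (coord y i)) (termD T i x) x := by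
  have hA : HasFDerivAt (fun y : EuclideanSpace ℝ (Fin T) => Psi (-(coord y (i-1))))
      (psi' (-(coord x (i-1))) • (-(Lcoord T (i-1)))) x :=
    (hasDerivAt_Psi _).comp_hasFDerivAt x (hasFDerivAt_coord x (i-1)).neg
  have hB : HasFDerivAt (fun y : EuclideanSpace ℝ (Fin T) => Phi (-(coord y i)))
      (phi' (-(coord x i)) • (-(Lcoord T i))) x :=
    (hasDerivAt_Phi _).comp_hasFDerivAt x (hasFDerivAt_coord x i).neg
  have hC : HasFDerivAt (fun y : EuclideanSpace ℝ (Fin T) => Psi (coord y (i-1)))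
      (psi' (coord x (i-1)) • Lcoord T (i-1)) x :=
    (hasDerivAt_Psi _).comp_hasFDerivAt x (hasFDerivAt_coord x (i-1))
  have hD : HasFDerivAt (fun y : EuclideanSpace ℝ (Fin T) => Phi (coord y i))
      (phi' (coord x i) • Lcoord T i) x :=
    (hasDerivAt_Phi _).comp_hasFDerivAt x (hasFDerivAt_coord x i)
  have h := (hA.mul hB).sub (hC.mul hD)
  refine h.congr_fderiv ?_
  ext y
  simp only [termD, ContinuousLinearMap.add_apply, ContinuousLinearMap.coe_smul',
    Pi.smul_apply, smul_eq_mul, ContinuousLinearMap.sub_apply, ContinuousLinearMap.neg_apply]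
  ring

lemma gradient_apply {T : ℕ} {f : EuclideanSpace ℝ (Fin T) → ℝ}
    {D : EuclideanSpace ℝ (Fin T) →L[ℝ] ℝ} {x : EuclideanSpace ℝ (Fin T)}
    (h : HasFDerivAt f D x) (j : Fin T) :
    gradient f x j = D (EuclideanSpace.single j 1) := by
  have h2 : (inner ℝ (gradient f x) (EuclideanSpace.single j (1:ℝ)) : ℝ)
      = fderiv ℝ f x (EuclideanSpace.single j 1) := by
    rw [gradient]
    exact InnerProductSpace.toDual_symm_apply
  rw [h.fderiv] at h2
  rw [← h2, EuclideanSpace.inner_single_right]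
  simp

/-- Progress along the chain alternates between E and O: if all (1-based) coordinates of
x beyond k vanish then (i) all partial derivatives of E and O beyond k+1 vanish;
(ii) if k is odd then ∂_{k+1}E(x) = 0; (iii) if k is even then ∂_{k+1}O(x) = 0. -/
theorem chain_alternation (T : ℕ) (hT : 1 ≤ T) (x : EuclideanSpace ℝ (Fin T))
    (k : ℕ) (hk : k < T) (hx : ∀ j : Fin T, k < (j : ℕ) + 1 → x j = 0) :
    (∀ j : Fin T, k + 1 < (j : ℕ) + 1 →
      gradient (Echain T) x j = 0 ∧ gradient (Ochain T) x j = 0) ∧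
    (Odd k → gradient (Echain T) x ⟨k, hk⟩ = 0) ∧
    (Even k → gradient (Ochain T) x ⟨k, hk⟩ = 0) := by
  have hc : ∀ m : ℕ, k ≤ m → coord x m = 0 := by
    intro m hm
    rw [coord]
    split
    · next h => exact hx ⟨m, h⟩ (by simp only [Fin.val_mk]; omega)
    · rfl
  -- fderiv of the head term of Echain
  have hhead : HasFDerivAt (fun y : EuclideanSpace ℝ (Fin T) => -(Psi 1) * Phi (coord y 0))
      ((-(Psi 1) * phi' (coord x 0)) • Lcoord T 0) x := by
    have h := ((hasDerivAt_Phi (coord x 0)).comp_hasFDerivAt x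
      (hasFDerivAt_coord x 0)).const_mul (-(Psi 1))
    refine h.congr_fderiv ?_
    ext y
    simp only [ContinuousLinearMap.coe_smul', Pi.smul_apply, smul_eq_mul]
    ring
  have hE : HasFDerivAt (Echain T)
      ((-(Psi 1) * phi' (coord x 0)) • Lcoord T 0
        + ∑ i ∈ (Finset.Ico 1 T).filter (fun i => Even i), termD T i x) x :=
    hhead.add (HasFDerivAt.fun_sum (fun i _ => hasFDerivAt_term i x))
  have hO : HasFDerivAt (Ochain T)
      (∑ i ∈ (Finset.Ico 1 T).filter (fun i => Odd i), termD T i x) x :=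
    HasFDerivAt.fun_sum (fun i _ => hasFDerivAt_term i x)
  -- evaluation of each term derivative at a basis vector
  have hterm0 : ∀ (i : ℕ) (j : Fin T), k ≤ (j : ℕ) → (i ≠ (j : ℕ) ∨ k + 1 ≤ (j : ℕ)) →
      termD T i x (EuclideanSpace.single j 1) = 0 := by
    intro i j hj hcase
    rw [termD]
    simp only [ContinuousLinearMap.add_apply, ContinuousLinearMap.coe_smul',
      Pi.smul_apply, smul_eq_mul, Lcoord_single]
    have e1 : (-(psi' (-(coord x (i-1)))) * Phi (-(coord x i)) - psi' (coord x (i-1))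
        * Phi (coord x i)) * (if i - 1 = (j : ℕ) then 1 else 0) = 0 := by
      by_cases h : i - 1 = (j : ℕ)
      · have hz : coord x (i-1) = 0 := by rw [h]; exact hc _ hj
        rw [hz, neg_zero, psi'_nonpos (by norm_num : (0:ℝ) ≤ 1/2)]
        ring
      · rw [if_neg h, mul_zero]
    have e2 : (-(Psi (-(coord x (i-1)))) * phi' (-(coord x i)) - Psi (coord x (i-1))
        * phi' (coord x i)) * (if i = (j : ℕ) then 1 else 0) = 0 := by
      by_cases h : i = (j : ℕ)
      · have hj1 : k + 1 ≤ (j : ℕ) := by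
          rcases hcase with h' | h'
          · exact absurd h h'
          · exact h'
        have hz : coord x (i-1) = 0 := hc _ (by omega)
        rw [hz, neg_zero, Psi_nonpos (by norm_num : (0:ℝ) ≤ 1/2)]
        ring
      · rw [if_neg h, mul_zero]
    rw [e1, e2, add_zero]
  refine ⟨?_, ?_, ?_⟩
  · intro j hj
    have hj' : k + 1 ≤ (j : ℕ) := by omega
    constructor
    · rw [gradient_apply hE j, ContinuousLinearMap.add_apply, ContinuousLinearMap.sum_apply]
      have h0 : ((-(Psi 1) * phi' (coord x 0)) • Lcoord T 0) (EuclideanSpace.single j 1) = 0 := by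
        simp only [ContinuousLinearMap.coe_smul', Pi.smul_apply, smul_eq_mul, Lcoord_single]
        rw [if_neg (by omega : (0:ℕ) ≠ (j : ℕ)), mul_zero]
      rw [h0, zero_add]
      exact Finset.sum_eq_zero fun i _ => hterm0 i j (by omega) (Or.inr hj')
    · rw [gradient_apply hO j, ContinuousLinearMap.sum_apply]
      exact Finset.sum_eq_zero fun i _ => hterm0 i j (by omega) (Or.inr hj')
  · intro hodd
    rw [gradient_apply hE ⟨k, hk⟩, ContinuousLinearMap.add_apply, ContinuousLinearMap.sum_apply]
    have h0 : ((-(Psi 1) * phi' (coord x 0)) • Lcoord T 0)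
        (EuclideanSpace.single (⟨k, hk⟩ : Fin T) 1) = 0 := by
      simp only [ContinuousLinearMap.coe_smul', Pi.smul_apply, smul_eq_mul, Lcoord_single]
      have : (0:ℕ) ≠ ((⟨k, hk⟩ : Fin T) : ℕ) := by
        simp only [Fin.val_mk]
        rintro rfl
        exact (Nat.not_odd_iff_even.mpr Even.zero) hodd
      rw [if_neg this, mul_zero]
    rw [h0, zero_add]
    refine Finset.sum_eq_zero fun i hi => ?_
    have heven : Even i := (Finset.mem_filter.mp hi).2
    refine hterm0 i ⟨k, hk⟩ (by simp) (Or.inl ?_)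
    simp only [Fin.val_mk]
    rintro rfl
    exact (Nat.not_odd_iff_even.mpr heven) hodd
  · intro heven
    rw [gradient_apply hO ⟨k, hk⟩, ContinuousLinearMap.sum_apply]
    refine Finset.sum_eq_zero fun i hi => ?_
    have hoddi : Odd i := (Finset.mem_filter.mp hi).2
    refine hterm0 i ⟨k, hk⟩ (by simp) (Or.inl ?_)
    simp only [Fin.val_mk]
    rintro rfl
    exact (Nat.not_even_iff_odd.mpr hoddi) heven
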